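/- Let S be a semiring such that for every subtractive left ideal N of S, the inclusion ι : N → S admits a left inverse S-linear map h : S → N with h ∘ ι = id_N. Then S is left k-Noetherian: every ascending chain of subtractive left ideals of S terminates. -/
import Mathlib


/-- A left ideal `N ≤ S` (a submodule of `S` as a left `S`-semimodule) is subtractive. -/
def Subtractive {S : Type*} [Semiring S] (N : Submodule S S) : Prop :=
  ∀ s : S, ∀ x ∈ N, ∀ y ∈ N, s + x = y → s ∈ N

/-- if for every subtractive left ideal `N` of `S` the inclusion
`ι : N → S` admits an `S`-linear left inverse `h : S → N` (`h ∘ ι = id`), then `S` is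
left `k`-Noetherian: every ascending chain of subtractive left ideals terminates. -/
theorem stmt_18 (S : Type*) [Semiring S]
    (h : ∀ N : Submodule S S, Subtractive N →
      ∃ g : S →ₗ[S] N, ∀ x : N, g (x : S) = x) :
    ∀ f : ℕ → Submodule S S, (∀ n, Subtractive (f n)) → Monotone f →
      ∃ n, ∀ m, n ≤ m → f m = f n := by
  intro f hsub hmono
  set N : Submodule S S := ⨆ n, f n with hN
  have hdir : Directed (· ≤ ·) f := hmono.directed_le
  have hmem : ∀ x : S, x ∈ N ↔ ∃ n, x ∈ f n := fun x =>
    Submodule.mem_iSup_of_directed f hdir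
  have hNsub : Subtractive N := by
    intro s x hx y hy hxy
    obtain ⟨i, hi⟩ := (hmem x).1 hx
    obtain ⟨j, hj⟩ := (hmem y).1 hy
    obtain ⟨k, hik, hjk⟩ := hdir i j
    exact (hmem s).2 ⟨k, hsub k s x (hik hi) y (hjk hj) hxy⟩
  obtain ⟨g, hg⟩ := h N hNsub
  obtain ⟨n, hn⟩ := (hmem (g 1 : S)).1 (g 1).2
  refine ⟨n, fun m hm => le_antisymm (fun x hx => ?_) (hmono hm)⟩
  have hxN : x ∈ N := (hmem x).2 ⟨m, hx⟩
  have h2 : (g x : S) = x := congrArg Subtype.val (hg ⟨x, hxN⟩)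
  have hxg : g x = x • g 1 := by rw [← g.map_smul, smul_eq_mul, mul_one]
  have : x = x • (g 1 : S) := by rw [← Submodule.coe_smul, ← hxg, h2]
  rw [this]
  exact (f n).smul_mem x hn
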